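/- arXiv:1012.2254 — 2 statements merged into one kernel-verified Lean document; each statement's English description precedes it below -/
import Mathlib

section
/- Let g be a non-negative, increasing, concave function on [0,∞), and let A, B be PSD n×n Hermitian matrices with A ≥ ‖B‖_∞ · I (so in particular A ≥ B ≥ 0). Then for every k, the k-th largest eigenvalue of g(A−B) is at least the k-th largest eigenvalue of g(A) − g(B). -/
open Matrix
open scoped ComplexOrder

/-- `f` applied to a matrix via the spectral decomposition (junk value `0` if
the matrix is not Hermitian). -/
noncomputable def matFun {n : ℕ} (f : ℝ → ℝ) (A : Matrix (Fin n) (Fin n) ℂ) :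
    Matrix (Fin n) (Fin n) ℂ :=
  if hA : A.IsHermitian then
    (hA.eigenvectorUnitary : Matrix (Fin n) (Fin n) ℂ) *
      Matrix.diagonal (fun i => (f (hA.eigenvalues i) : ℂ)) *
      (star hA.eigenvectorUnitary : Matrix (Fin n) (Fin n) ℂ)
  else 0

/-- The eigenvalues of a Hermitian matrix, sorted in non-increasing order
(junk value `0` if the matrix is not Hermitian). -/
noncomputable def eigsDesc {n : ℕ} (A : Matrix (Fin n) (Fin n) ℂ) : Fin n → ℝ :=
  if hA : A.IsHermitian then (fun k => hA.eigenvalues (Tuple.sort hA.eigenvalues (Fin.rev k)))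
  else 0

/-- The absolute value `|X| = (XᴴX)^{1/2}` of a matrix. -/
noncomputable def matAbs {n : ℕ} (X : Matrix (Fin n) (Fin n) ℂ) : Matrix (Fin n) (Fin n) ℂ :=
  (Matrix.posSemidef_conjTranspose_mul_self X).1.eigenvectorUnitary.1 *
    diagonal ((↑) ∘ (√·) ∘ (Matrix.posSemidef_conjTranspose_mul_self X).1.eigenvalues) *
    (star (Matrix.posSemidef_conjTranspose_mul_self X).1.eigenvectorUnitary : Matrix (Fin n) (Fin n) ℂ)

/-- The singular values of `X`, sorted in non-increasing order. -/
noncomputable def svalsDesc {n : ℕ} (X : Matrix (Fin n) (Fin n) ℂ) : Fin n → ℝ :=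
  eigsDesc (matAbs X)

/-- Sum of the first `k` entries of a vector indexed by `Fin n`. -/
noncomputable def kSum {n : ℕ} (μ : Fin n → ℝ) (k : ℕ) : ℝ :=
  ∑ j ∈ Finset.univ.filter (fun j : Fin n => (j : ℕ) < k), μ j

/-- The operator norm: the largest singular value. -/
noncomputable def opNorm {n : ℕ} (X : Matrix (Fin n) (Fin n) ℂ) : ℝ :=
  ⨆ i, svalsDesc X i

namespace EigAux
open Matrix Complex
open scoped ComplexOrder

variable {n : ℕ}

noncomputable def qf (X : Matrix (Fin n) (Fin n) ℂ) (v : Fin n → ℂ) : ℂ :=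
  star v ⬝ᵥ (X *ᵥ v)

noncomputable def nsq (v : Fin n → ℂ) : ℝ := ∑ i, Complex.normSq (v i)

lemma nsq_nonneg (v : Fin n → ℂ) : 0 ≤ nsq v :=
  Finset.sum_nonneg fun i _ => Complex.normSq_nonneg _

lemma nsq_pos {v : Fin n → ℂ} (hv : v ≠ 0) : 0 < nsq v := by
  rcases (nsq_nonneg v).lt_or_eq with h | h
  · exact h
  · exfalso; apply hv
    have := (Finset.sum_eq_zero_iff_of_nonneg (fun i _ => Complex.normSq_nonneg (v i))).mp h.symm
    funext i
    exact Complex.normSq_eq_zero.mp (this i (Finset.mem_univ i))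

lemma nsq_star_mulVec (U : Matrix.unitaryGroup (Fin n) ℂ) (v : Fin n → ℂ) :
    nsq (star U.1 *ᵥ v) = nsq v := by
  have key : star (star U.1 *ᵥ v) ⬝ᵥ (star U.1 *ᵥ v) = star v ⬝ᵥ v := by
    have h1 : star (star U.1 *ᵥ v) = star v ᵥ* U.1 := by
      rw [Matrix.star_mulVec, Matrix.star_eq_conjTranspose, Matrix.conjTranspose_conjTranspose]
    rw [h1, Matrix.dotProduct_mulVec, Matrix.vecMul_vecMul,
      (Matrix.mem_unitaryGroup_iff).mp U.2, Matrix.vecMul_one]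
  have h2 : ∀ w : Fin n → ℂ, star w ⬝ᵥ w = ((nsq w : ℝ) : ℂ) := by
    intro w; simp [dotProduct, nsq, Complex.normSq_eq_conj_mul_self]
  rw [h2, h2] at key
  exact_mod_cast key

section herm
variable {M : Matrix (Fin n) (Fin n) ℂ} (hM : M.IsHermitian)

/-- weights `|⟨u_i, v⟩|²` in the eigenbasis of `M` -/
noncomputable def pcoef (v : Fin n → ℂ) : Fin n → ℝ :=
  fun i => Complex.normSq ((star (hM.eigenvectorUnitary : Matrix (Fin n) (Fin n) ℂ) *ᵥ v) i)

lemma pcoef_nonneg (v : Fin n → ℂ) (i : Fin n) : 0 ≤ pcoef hM v i :=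
  Complex.normSq_nonneg _

lemma sum_pcoef (v : Fin n → ℂ) : ∑ i, pcoef hM v i = nsq v :=
  nsq_star_mulVec hM.eigenvectorUnitary v

lemma qf_UDU (U : Matrix (Fin n) (Fin n) ℂ) (d : Fin n → ℝ) (v : Fin n → ℂ) :
    qf (U * Matrix.diagonal (fun i => (d i : ℂ)) * star U) v
      = ((∑ i, d i * Complex.normSq ((star U *ᵥ v) i) : ℝ) : ℂ) := by
  unfold qf
  rw [← Matrix.mulVec_mulVec, ← Matrix.mulVec_mulVec, Matrix.dotProduct_mulVec]
  have h1 : star v ᵥ* U = star (star U *ᵥ v) := by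
    rw [Matrix.star_mulVec, Matrix.star_eq_conjTranspose, Matrix.conjTranspose_conjTranspose]
  rw [h1]
  push_cast
  simp only [dotProduct, Matrix.mulVec_diagonal, Pi.star_apply, Complex.normSq_eq_conj_mul_self]
  apply Finset.sum_congr rfl
  intro i _
  simp only [RingHom.comp_apply, Complex.star_def]
  ring

lemma qf_herm (v : Fin n → ℂ) :
    qf M v = ((∑ i, hM.eigenvalues i * pcoef hM v i : ℝ) : ℂ) := by
  conv_lhs => rw [hM.spectral_theorem]
  exact qf_UDU _ _ v

lemma qf_matFun (g : ℝ → ℝ) (v : Fin n → ℂ) :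
    qf (matFun g M) v = ((∑ i, g (hM.eigenvalues i) * pcoef hM v i : ℝ) : ℂ) := by
  unfold matFun
  rw [dif_pos hM]
  exact qf_UDU _ _ v

end herm


/-- coordinate subspace -/
noncomputable def coordSub (S : Finset (Fin n)) : Submodule ℂ (Fin n → ℂ) where
  carrier := {w | ∀ i ∉ S, w i = 0}
  add_mem' := by intro a b ha hb i hi; simp [ha i hi, hb i hi]
  zero_mem' := by intro i _; rfl
  smul_mem' := by intro c a ha i hi; simp [ha i hi]

noncomputable def coordSubEquiv (S : Finset (Fin n)) : coordSub S ≃ₗ[ℂ] (S → ℂ) where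
  toFun w := fun i => w.1 i
  map_add' := by intros; rfl
  map_smul' := by intros; rfl
  invFun f := ⟨fun i => if h : i ∈ S then f ⟨i, h⟩ else 0, by intro i hi; simp [hi]⟩
  left_inv := by
    rintro ⟨w, hw⟩; ext i; by_cases h : i ∈ S <;> simp [h]
    exact (hw i h).symm
  right_inv := by intro f; ext i; simp

lemma finrank_coordSub (S : Finset (Fin n)) :
    Module.finrank ℂ (coordSub S) = S.card := by
  rw [(coordSubEquiv S).finrank_eq]
  simp [Module.finrank_pi]

/-- mulVec by a unitary as a linear equivalence -/
noncomputable def unitaryMulVec (U : Matrix.unitaryGroup (Fin n) ℂ) :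
    (Fin n → ℂ) ≃ₗ[ℂ] (Fin n → ℂ) :=
  LinearEquiv.ofLinear (Matrix.mulVecLin U.1) (Matrix.mulVecLin (star U.1))
    (by rw [← Matrix.mulVecLin_mul, (Matrix.mem_unitaryGroup_iff).mp U.2, Matrix.mulVecLin_one])
    (by rw [← Matrix.mulVecLin_mul, (Matrix.mem_unitaryGroup_iff').mp U.2, Matrix.mulVecLin_one])

/-- spectral-type subspace: image of a coordinate subspace under a unitary -/
noncomputable def spn (U : Matrix.unitaryGroup (Fin n) ℂ) (S : Finset (Fin n)) :
    Submodule ℂ (Fin n → ℂ) :=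
  (coordSub S).map (unitaryMulVec U : (Fin n → ℂ) →ₗ[ℂ] (Fin n → ℂ))

lemma finrank_spn (U : Matrix.unitaryGroup (Fin n) ℂ) (S : Finset (Fin n)) :
    Module.finrank ℂ (spn U S) = S.card := by
  rw [spn]
  rw [LinearEquiv.finrank_map_eq (unitaryMulVec U) (coordSub S), finrank_coordSub]

lemma coords_eq_zero_of_mem_spn {U : Matrix.unitaryGroup (Fin n) ℂ} {S : Finset (Fin n)}
    {v : Fin n → ℂ} (hv : v ∈ spn U S) : ∀ i ∉ S, (star U.1 *ᵥ v) i = 0 := by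
  obtain ⟨w, hw, rfl⟩ := hv
  intro i hi
  have : star U.1 *ᵥ ((unitaryMulVec U : (Fin n → ℂ) →ₗ[ℂ] (Fin n → ℂ)) w) = w := by
    show star U.1 *ᵥ (U.1 *ᵥ w) = w
    rw [Matrix.mulVec_mulVec, (Matrix.mem_unitaryGroup_iff').mp U.2, Matrix.one_mulVec]
  rw [this]
  exact hw i hi

lemma exists_ne_zero_mem_inf (V W : Submodule ℂ (Fin n → ℂ))
    (h : n < Module.finrank ℂ V + Module.finrank ℂ W) :
    ∃ v : Fin n → ℂ, v ≠ 0 ∧ v ∈ V ⊓ W := by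
  have hd := Submodule.finrank_sup_add_finrank_inf_eq V W
  have hsup : Module.finrank ℂ ↥(V ⊔ W) ≤ n := by
    simpa using Submodule.finrank_le (V ⊔ W)
  have hpos : 0 < Module.finrank ℂ ↥(V ⊓ W) := by omega
  obtain ⟨⟨v, hv⟩, hvne⟩ := Module.finrank_pos_iff_exists_ne_zero.mp hpos
  exact ⟨v, by simpa using hvne, hv⟩


lemma eigsDesc_eq_eigenvalues {M : Matrix (Fin n) (Fin n) ℂ} (hM : M.IsHermitian) (k : Fin n) :
    eigsDesc M k = hM.eigenvalues (Tuple.sort hM.eigenvalues (Fin.rev k)) := by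
  rw [eigsDesc, dif_pos hM]

lemma eigsDesc_antitone {M : Matrix (Fin n) (Fin n) ℂ} (hM : M.IsHermitian) :
    Antitone (eigsDesc M) := by
  intro j k h
  rw [eigsDesc_eq_eigenvalues hM, eigsDesc_eq_eigenvalues hM]
  exact Tuple.monotone_sort hM.eigenvalues (Fin.rev_le_rev.mpr h)

lemma nsq_smul (a : ℂ) (v : Fin n → ℂ) : nsq (a • v) = Complex.normSq a * nsq v := by
  simp [nsq, Finset.mul_sum, Complex.normSq_mul]

lemma exists_unit_mem_inf (V W : Submodule ℂ (Fin n → ℂ))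
    (h : n < Module.finrank ℂ V + Module.finrank ℂ W) :
    ∃ v, nsq v = 1 ∧ v ∈ V ∧ v ∈ W := by
  obtain ⟨z, hz0, hz⟩ := exists_ne_zero_mem_inf V W h
  have hpos := nsq_pos hz0
  have hr : (0:ℝ) < Real.sqrt (nsq z) := Real.sqrt_pos.mpr hpos
  refine ⟨(((Real.sqrt (nsq z))⁻¹ : ℝ) : ℂ) • z, ?_,
    Submodule.smul_mem _ _ hz.1, Submodule.smul_mem _ _ hz.2⟩
  rw [nsq_smul, Complex.normSq_ofReal]
  have hs : Real.sqrt (nsq z) * Real.sqrt (nsq z) = nsq z := Real.mul_self_sqrt hpos.le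
  field_simp
  rw [Real.sq_sqrt hpos.le]

lemma eigsDesc_le_of_subspace {X : Matrix (Fin n) (Fin n) ℂ} (hX : X.IsHermitian) (k : Fin n)
    (c : ℝ) (V : Submodule ℂ (Fin n → ℂ)) (hd : n - (k:ℕ) ≤ Module.finrank ℂ V)
    (hb : ∀ v ∈ V, nsq v = 1 → qf X v ≤ ((c:ℝ) : ℂ)) :
    eigsDesc X k ≤ c := by
  classical
  have hτinj : Function.Injective (fun j : Fin n => Tuple.sort hX.eigenvalues (Fin.rev j)) :=
    fun a b hab => Fin.rev_injective ((Tuple.sort hX.eigenvalues).injective hab)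
  set S := (Finset.Iic k).image (fun j : Fin n => Tuple.sort hX.eigenvalues (Fin.rev j)) with hS
  obtain ⟨u, hu1, huV, huW⟩ := exists_unit_mem_inf V (spn hX.eigenvectorUnitary S) (by
    rw [finrank_spn, hS, Finset.card_image_of_injective _ hτinj, Fin.card_Iic]
    have := k.isLt
    omega)
  have hqf := hb u huV hu1
  rw [qf_herm hX] at hqf
  have hc : ∑ i, hX.eigenvalues i * pcoef hX u i ≤ c := by exact_mod_cast hqf
  refine le_trans ?_ hc
  have h1 : eigsDesc X k = eigsDesc X k * ∑ i, pcoef hX u i := by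
    rw [sum_pcoef, hu1, mul_one]
  rw [h1, Finset.mul_sum]
  apply Finset.sum_le_sum
  intro i _
  by_cases hp : pcoef hX u i = 0
  · rw [hp]; simp
  · have hiS : i ∈ S := by
      by_contra hiS
      exact hp (by
        unfold pcoef
        rw [coords_eq_zero_of_mem_spn huW i hiS, Complex.normSq_zero])
    obtain ⟨j, hj, rfl⟩ := Finset.mem_image.mp hiS
    have h2 : eigsDesc X k ≤ eigsDesc X j := eigsDesc_antitone hX (Finset.mem_Iic.mp hj)
    rw [eigsDesc_eq_eigenvalues hX j] at h2
    exact mul_le_mul_of_nonneg_right h2 (pcoef_nonneg hX u _)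

lemma le_eigsDesc_of_subspace {X : Matrix (Fin n) (Fin n) ℂ} (hX : X.IsHermitian) (k : Fin n)
    (c : ℝ) (V : Submodule ℂ (Fin n → ℂ)) (hd : (k:ℕ) + 1 ≤ Module.finrank ℂ V)
    (hb : ∀ v ∈ V, nsq v = 1 → ((c:ℝ) : ℂ) ≤ qf X v) :
    c ≤ eigsDesc X k := by
  classical
  have hτinj : Function.Injective (fun j : Fin n => Tuple.sort hX.eigenvalues (Fin.rev j)) :=
    fun a b hab => Fin.rev_injective ((Tuple.sort hX.eigenvalues).injective hab)
  set S := (Finset.Ici k).image (fun j : Fin n => Tuple.sort hX.eigenvalues (Fin.rev j)) with hS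
  obtain ⟨u, hu1, huV, huW⟩ := exists_unit_mem_inf V (spn hX.eigenvectorUnitary S) (by
    rw [finrank_spn, hS, Finset.card_image_of_injective _ hτinj, Fin.card_Ici]
    have := k.isLt
    omega)
  have hqf := hb u huV hu1
  rw [qf_herm hX] at hqf
  have hc : c ≤ ∑ i, hX.eigenvalues i * pcoef hX u i := by exact_mod_cast hqf
  refine le_trans hc ?_
  have h1 : eigsDesc X k = eigsDesc X k * ∑ i, pcoef hX u i := by
    rw [sum_pcoef, hu1, mul_one]
  rw [h1, Finset.mul_sum]
  apply Finset.sum_le_sum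
  intro i _
  by_cases hp : pcoef hX u i = 0
  · rw [hp]; simp
  · have hiS : i ∈ S := by
      by_contra hiS
      exact hp (by
        unfold pcoef
        rw [coords_eq_zero_of_mem_spn huW i hiS, Complex.normSq_zero])
    obtain ⟨j, hj, rfl⟩ := Finset.mem_image.mp hiS
    have h2 : eigsDesc X j ≤ eigsDesc X k := eigsDesc_antitone hX (Finset.mem_Ici.mp hj)
    rw [eigsDesc_eq_eigenvalues hX j] at h2
    exact mul_le_mul_of_nonneg_right h2 (pcoef_nonneg hX u _)

lemma star_dot_self (v : Fin n → ℂ) : star v ⬝ᵥ v = ((nsq v : ℝ) : ℂ) := by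
  simp [dotProduct, nsq, Complex.normSq_eq_conj_mul_self]

lemma qf_sub (X Y : Matrix (Fin n) (Fin n) ℂ) (v : Fin n → ℂ) :
    qf (X - Y) v = qf X v - qf Y v := by
  simp [qf, Matrix.sub_mulVec, dotProduct_sub]

lemma qf_smul_one (c : ℝ) (v : Fin n → ℂ) :
    qf ((c : ℂ) • (1 : Matrix (Fin n) (Fin n) ℂ)) v = ((c * nsq v : ℝ) : ℂ) := by
  rw [qf, Matrix.smul_mulVec, Matrix.one_mulVec, dotProduct_smul, star_dot_self,
    smul_eq_mul]
  push_cast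
  ring

/-- subadditivity of a concave function nonneg at the relevant points -/
lemma concave_sub {g : ℝ → ℝ} (hg0 : ∀ x ∈ Set.Ici (0:ℝ), 0 ≤ g x)
    (hgconc : ConcaveOn ℝ (Set.Ici (0:ℝ)) g) {x y : ℝ} (hy0 : 0 ≤ y) (hyx : y ≤ x) :
    g x ≤ g (x - y) + g y := by
  have hx0 : 0 ≤ x := hy0.trans hyx
  rcases eq_or_lt_of_le hx0 with hx | hx
  · have hxy : y = 0 := le_antisymm (hyx.trans hx.symm.le) hy0
    have : x = 0 := hx.symm
    subst this; subst hxy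
    simpa using hg0 0 (Set.mem_Ici.mpr le_rfl)
  · set t : ℝ := y / x with ht
    have ht0 : 0 ≤ t := div_nonneg hy0 hx.le
    have ht1 : t ≤ 1 := by
      rw [div_le_one hx]; exact hyx
    have key : ∀ s : ℝ, 0 ≤ s → s ≤ 1 → s * g x ≤ g (s * x) := by
      intro s hs0 hs1
      have hcc := hgconc.2 (Set.mem_Ici.mpr (le_refl (0:ℝ))) (Set.mem_Ici.mpr hx0)
        (by linarith : (0:ℝ) ≤ 1 - s) hs0 (by ring)
      simp only [smul_eq_mul, mul_zero, zero_add] at hcc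
      have hg00 : 0 ≤ g 0 := hg0 0 (Set.mem_Ici.mpr (le_refl (0:ℝ)))
      nlinarith [mul_nonneg (by linarith : (0:ℝ) ≤ 1 - s) hg00]
    have h1 := key t ht0 ht1
    have h2 := key (1 - t) (by linarith) (by linarith)
    have hxne : x ≠ 0 := ne_of_gt hx
    have e1 : t * x = y := by rw [ht]; exact div_mul_cancel₀ y hxne
    have e2 : (1 - t) * x = x - y := by
      rw [ht, sub_mul, one_mul, div_mul_cancel₀ y hxne]
    rw [e1] at h1
    rw [e2] at h2
    nlinarith [h1, h2]

open scoped MatrixOrder in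
lemma matAbs_of_psd {B : Matrix (Fin n) (Fin n) ℂ} (hB : B.PosSemidef) : matAbs B = B := by
  have h0 : (0 : Matrix (Fin n) (Fin n) ℂ) ≤ B := hB.nonneg
  have e : matAbs B = cfc Real.sqrt (Bᴴ * B) := by
    rw [(posSemidef_conjTranspose_mul_self B).1.cfc_eq, IsHermitian.cfc, Unitary.conjStarAlgAut_apply]; rfl
  have hBB : (0 : Matrix (Fin n) (Fin n) ℂ) ≤ B * B := by
    have := (posSemidef_conjTranspose_mul_self B).nonneg; rwa [hB.1] at this
  rw [e, hB.1, ← cfcₙ_eq_cfc (hf0 := by simp), ← CFC.sqrt_eq_real_sqrt _ hBB, CFC.sqrt_mul_self B h0]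

lemma eigenvalues_le_opNorm {B : Matrix (Fin n) (Fin n) ℂ} (hB : B.PosSemidef) (j : Fin n) :
    hB.1.eigenvalues j ≤ opNorm B := by
  have h1 : opNorm B = ⨆ i, eigsDesc B i := by
    rw [opNorm, svalsDesc, matAbs_of_psd hB]
  rw [h1]
  have h2 : eigsDesc B (Fin.rev ((Tuple.sort hB.1.eigenvalues).symm j)) = hB.1.eigenvalues j := by
    rw [eigsDesc_eq_eigenvalues hB.1, Fin.rev_rev, Equiv.apply_symm_apply]
  rw [← h2]
  exact le_ciSup (Set.Finite.bddAbove (Set.finite_range _)) _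

lemma opNorm_nonneg {B : Matrix (Fin n) (Fin n) ℂ} (hB : B.PosSemidef) (j : Fin n) :
    0 ≤ opNorm B :=
  (hB.eigenvalues_nonneg j).trans (eigenvalues_le_opNorm hB j)

lemma matFun_isHermitian {M : Matrix (Fin n) (Fin n) ℂ} (hM : M.IsHermitian) (g : ℝ → ℝ) :
    (matFun g M).IsHermitian := by
  rw [matFun, dif_pos hM]
  have hd : (Matrix.diagonal (fun i => (g (hM.eigenvalues i) : ℂ))).IsHermitian :=
    Matrix.isHermitian_diagonal_of_self_adjoint _ (by
      funext i
      simp [Pi.star_apply, Complex.star_def, Complex.conj_ofReal])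
  have := Matrix.isHermitian_mul_mul_conjTranspose
    (hM.eigenvectorUnitary : Matrix (Fin n) (Fin n) ℂ) hd
  simpa [Matrix.star_eq_conjTranspose] using this

lemma sum_le_of_mem_low {M : Matrix (Fin n) (Fin n) ℂ} (hM : M.IsHermitian) (k : Fin n)
    {v : Fin n → ℂ}
    (hv : v ∈ spn hM.eigenvectorUnitary
      ((Finset.Ici k).image (fun j : Fin n => Tuple.sort hM.eigenvalues (Fin.rev j))))
    (hv1 : nsq v = 1) :
    ∑ i, hM.eigenvalues i * pcoef hM v i ≤ eigsDesc M k := by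
  classical
  set S := (Finset.Ici k).image (fun j : Fin n => Tuple.sort hM.eigenvalues (Fin.rev j)) with hS
  have h1 : eigsDesc M k = ∑ i, eigsDesc M k * pcoef hM v i := by
    rw [← Finset.mul_sum, sum_pcoef, hv1, mul_one]
  rw [h1]
  apply Finset.sum_le_sum
  intro i _
  by_cases hp : pcoef hM v i = 0
  · rw [hp]; simp
  · have hiS : i ∈ S := by
      by_contra hiS
      exact hp (by
        unfold pcoef
        rw [coords_eq_zero_of_mem_spn hv i hiS, Complex.normSq_zero])
    obtain ⟨j, hj, rfl⟩ := Finset.mem_image.mp hiS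
    have h2 : eigsDesc M j ≤ eigsDesc M k := eigsDesc_antitone hM (Finset.mem_Ici.mp hj)
    rw [eigsDesc_eq_eigenvalues hM j] at h2
    exact mul_le_mul_of_nonneg_right h2 (pcoef_nonneg hM v _)

end EigAux

/-- For a non-negative increasing concave `g` on `[0,∞)` and PSD `A, B` with
`A ≥ ‖B‖_∞ · I`, one has `λ_k^↓(g(A−B)) ≥ λ_k^↓(g(A) − g(B))` for every `k`. -/
theorem eig_concave_sub {n : ℕ} (g : ℝ → ℝ)
    (hg0 : ∀ x ∈ Set.Ici (0 : ℝ), 0 ≤ g x)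
    (hgmono : MonotoneOn g (Set.Ici (0 : ℝ)))
    (hgconc : ConcaveOn ℝ (Set.Ici (0 : ℝ)) g)
    (A B : Matrix (Fin n) (Fin n) ℂ) (hA : A.PosSemidef) (hB : B.PosSemidef)
    (hAB : (A - (opNorm B : ℂ) • 1).PosSemidef) (k : Fin n) :
    eigsDesc (matFun g A - matFun g B) k ≤ eigsDesc (matFun g (A - B)) k := by
  classical
  open EigAux in
  set c := opNorm B with hcdef
  have hAh : A.IsHermitian := hA.1
  have hBh : B.IsHermitian := hB.1
  have hMh : (A - B).IsHermitian := hAh.sub hBh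
  have hc0 : 0 ≤ c := EigAux.opNorm_nonneg hB k
  have hBev : ∀ j, 0 ≤ hBh.eigenvalues j ∧ hBh.eigenvalues j ≤ c :=
    fun j => ⟨hB.eigenvalues_nonneg j, EigAux.eigenvalues_le_opNorm hB j⟩
  -- quadratic form of A dominates c · ‖v‖²
  have hAq : ∀ v : Fin n → ℂ, ((c * EigAux.nsq v : ℝ) : ℂ) ≤ EigAux.qf A v := by
    intro v
    have h1 : (0 : ℂ) ≤ EigAux.qf (A - (c : ℂ) • 1) v := hAB.dotProduct_mulVec_nonneg v
    rw [EigAux.qf_sub, EigAux.qf_smul_one] at h1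
    exact sub_nonneg.mp h1
  -- quadratic form of B is at most c · ‖v‖²
  have hBq : ∀ v : Fin n → ℂ, EigAux.qf B v ≤ ((c * EigAux.nsq v : ℝ) : ℂ) := by
    intro v
    rw [EigAux.qf_herm hBh]
    rw [Complex.real_le_real]
    calc ∑ i, hBh.eigenvalues i * EigAux.pcoef hBh v i
        ≤ ∑ i, c * EigAux.pcoef hBh v i := by
          apply Finset.sum_le_sum
          intro i _
          exact mul_le_mul_of_nonneg_right (hBev i).2 (EigAux.pcoef_nonneg hBh v i)
      _ = c * EigAux.nsq v := by rw [← Finset.mul_sum, EigAux.sum_pcoef]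
  have hMpsd : (A - B).PosSemidef := by
    refine .of_dotProduct_mulVec_nonneg hMh fun x => ?_
    have h2 : EigAux.qf B x ≤ EigAux.qf A x := (hBq x).trans (hAq x)
    have h3 : (0 : ℂ) ≤ EigAux.qf A x - EigAux.qf B x := sub_nonneg.mpr h2
    rw [← EigAux.qf_sub] at h3
    exact h3
  set lam := eigsDesc (A - B) k with hlamdef
  have hlam0 : 0 ≤ lam := by
    rw [hlamdef, EigAux.eigsDesc_eq_eigenvalues hMh]
    exact hMpsd.eigenvalues_nonneg _
  have hτinj : Function.Injective (fun j : Fin n => Tuple.sort hMh.eigenvalues (Fin.rev j)) :=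
    fun a b hab => Fin.rev_injective ((Tuple.sort hMh.eigenvalues).injective hab)
  -- Step B : g(lam) ≤ λ_k(g(A-B))
  have hgM : g lam ≤ eigsDesc (matFun g (A - B)) k := by
    apply EigAux.le_eigsDesc_of_subspace (EigAux.matFun_isHermitian hMh g) k (g lam)
      (EigAux.spn hMh.eigenvectorUnitary
        ((Finset.Iic k).image (fun j : Fin n => Tuple.sort hMh.eigenvalues (Fin.rev j))))
    · rw [EigAux.finrank_spn, Finset.card_image_of_injective _ hτinj, Fin.card_Iic]
    · intro v hv hv1
      rw [EigAux.qf_matFun hMh g, Complex.real_le_real]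
      have h1 : g lam = ∑ i, g lam * EigAux.pcoef hMh v i := by
        rw [← Finset.mul_sum, EigAux.sum_pcoef, hv1, mul_one]
      rw [h1]
      apply Finset.sum_le_sum
      intro i _
      by_cases hp : EigAux.pcoef hMh v i = 0
      · rw [hp]; simp
      · have hiS : i ∈ (Finset.Iic k).image
            (fun j : Fin n => Tuple.sort hMh.eigenvalues (Fin.rev j)) := by
          by_contra hiS
          exact hp (by
            unfold EigAux.pcoef
            rw [EigAux.coords_eq_zero_of_mem_spn hv i hiS, Complex.normSq_zero])
        obtain ⟨j, hj, rfl⟩ := Finset.mem_image.mp hiS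
        have h2 : lam ≤ eigsDesc (A - B) j :=
          EigAux.eigsDesc_antitone hMh (Finset.mem_Iic.mp hj)
        rw [EigAux.eigsDesc_eq_eigenvalues hMh j] at h2
        have h3 : g lam ≤ g (hMh.eigenvalues (Tuple.sort hMh.eigenvalues (Fin.rev j))) :=
          hgmono (Set.mem_Ici.mpr hlam0) (Set.mem_Ici.mpr (hlam0.trans h2)) h2
        exact mul_le_mul_of_nonneg_right h3 (EigAux.pcoef_nonneg hMh v _)
  -- Step A : λ_k(g(A) - g(B)) ≤ g(lam)
  have hXle : eigsDesc (matFun g A - matFun g B) k ≤ g lam := by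
    apply EigAux.eigsDesc_le_of_subspace
      ((EigAux.matFun_isHermitian hAh g).sub (EigAux.matFun_isHermitian hBh g)) k (g lam)
      (EigAux.spn hMh.eigenvectorUnitary
        ((Finset.Ici k).image (fun j : Fin n => Tuple.sort hMh.eigenvalues (Fin.rev j))))
    · rw [EigAux.finrank_spn, Finset.card_image_of_injective _ hτinj, Fin.card_Ici]
    · intro v hv hv1
      rw [EigAux.qf_sub, EigAux.qf_matFun hAh g, EigAux.qf_matFun hBh g, ← Complex.ofReal_sub,
        Complex.real_le_real]
      set pA := EigAux.pcoef hAh v with hpA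
      set pB := EigAux.pcoef hBh v with hpB
      set a := ∑ j, hAh.eigenvalues j * pA j with ha
      have hsumA : ∑ j, pA j = 1 := by rw [hpA, EigAux.sum_pcoef, hv1]
      have hsumB : ∑ j, pB j = 1 := by rw [hpB, EigAux.sum_pcoef, hv1]
      have hac : c ≤ a := by
        have := hAq v
        rw [EigAux.qf_herm hAh, Complex.real_le_real, hv1, mul_one] at this
        exact this
      have ha0 : 0 ≤ a := hc0.trans hac
      -- Jensen for A
      have jA : ∑ j, g (hAh.eigenvalues j) * pA j ≤ g a := by
        have hj := hgconc.le_map_sum (t := Finset.univ) (w := pA) (p := hAh.eigenvalues)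
          (fun i _ => EigAux.pcoef_nonneg hAh v i) hsumA
          (fun i _ => Set.mem_Ici.mpr (hA.eigenvalues_nonneg i))
        simp only [smul_eq_mul] at hj
        calc ∑ j, g (hAh.eigenvalues j) * pA j
            = ∑ j, pA j * g (hAh.eigenvalues j) := by
              exact Finset.sum_congr rfl fun i _ => mul_comm _ _
          _ ≤ g (∑ j, pA j * hAh.eigenvalues j) := hj
          _ = g a := by
              rw [ha]
              congr 1
              exact Finset.sum_congr rfl fun i _ => mul_comm _ _
      -- the M-side sum
      have hABq : a - ∑ i, hBh.eigenvalues i * pB i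
          = ∑ i, hMh.eigenvalues i * EigAux.pcoef hMh v i := by
        have hq := EigAux.qf_sub A B v
        rw [EigAux.qf_herm hMh, EigAux.qf_herm hAh, EigAux.qf_herm hBh,
          ← Complex.ofReal_sub] at hq
        have := Complex.ofReal_inj.mp hq
        rw [← hpA, ← hpB, ← ha] at this
        linarith [this]
      have hm_le : ∑ i, hMh.eigenvalues i * EigAux.pcoef hMh v i ≤ lam :=
        EigAux.sum_le_of_mem_low hMh k hv hv1
      have hm0 : 0 ≤ ∑ i, hMh.eigenvalues i * EigAux.pcoef hMh v i := by
        have := hMpsd.dotProduct_mulVec_nonneg v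
        rw [show (dotProduct (star v) ((A - B) *ᵥ v)) = EigAux.qf (A - B) v from rfl,
          EigAux.qf_herm hMh, Complex.zero_le_real] at this
        exact this
      -- chain
      calc ∑ j, g (hAh.eigenvalues j) * pA j - ∑ i, g (hBh.eigenvalues i) * pB i
          ≤ g a - ∑ i, g (hBh.eigenvalues i) * pB i := by linarith [jA]
        _ = ∑ i, (g a - g (hBh.eigenvalues i)) * pB i := by
            simp only [sub_mul]
            rw [Finset.sum_sub_distrib, ← Finset.mul_sum, hsumB, mul_one]
        _ ≤ ∑ i, g (a - hBh.eigenvalues i) * pB i := by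
            apply Finset.sum_le_sum
            intro i _
            have hsub := EigAux.concave_sub hg0 hgconc (hBev i).1 ((hBev i).2.trans hac)
            have : g a - g (hBh.eigenvalues i) ≤ g (a - hBh.eigenvalues i) := by linarith
            exact mul_le_mul_of_nonneg_right this (EigAux.pcoef_nonneg hBh v i)
        _ ≤ g (∑ i, pB i * (a - hBh.eigenvalues i)) := by
            have hj := hgconc.le_map_sum (t := Finset.univ) (w := pB)
              (p := fun i => a - hBh.eigenvalues i)
              (fun i _ => EigAux.pcoef_nonneg hBh v i) hsumB
              (fun i _ => Set.mem_Ici.mpr (show (0:ℝ) ≤ a - hBh.eigenvalues i by linarith [(hBev i).2, hac]))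
            simp only [smul_eq_mul] at hj
            calc ∑ i, g (a - hBh.eigenvalues i) * pB i
                = ∑ i, pB i * g (a - hBh.eigenvalues i) :=
                  Finset.sum_congr rfl fun i _ => mul_comm _ _
              _ ≤ g (∑ i, pB i * (a - hBh.eigenvalues i)) := hj
        _ = g (∑ i, hMh.eigenvalues i * EigAux.pcoef hMh v i) := by
            congr 1
            rw [← hABq]
            rw [Finset.sum_congr rfl (fun i _ => mul_sub (pB i) a (hBh.eigenvalues i)),
              Finset.sum_sub_distrib]
            rw [← Finset.sum_mul, hsumB]
            ring_nf
            rw [Finset.sum_congr rfl (fun i _ => mul_comm (pB i) (hBh.eigenvalues i))]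
        _ ≤ g lam :=
            hgmono (Set.mem_Ici.mpr hm0) (Set.mem_Ici.mpr hlam0) hm_le
  exact hXle.trans hgM
end

section
/- For any n×n matrices A and B (or Hermitian A, B), and every k ≤ 2n, the sum of the k largest singular values of the block-diagonal matrix A ⊕ B is at most the sum of the k largest singular values of (|A|+|B|) ⊕ 0; equivalently, ‖A ⊕ B‖ ≤ ‖(|A|+|B|) ⊕ 0‖ for all unitarily invariant norms on M_{2n}. -/
open Matrix
open scoped ComplexOrder

/-- The `2n × 2n` block-diagonal matrix `A ⊕ B`, re-indexed by `Fin (n + n)`. -/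
noncomputable def blockDiag2 {n : ℕ} (A B : Matrix (Fin n) (Fin n) ℂ) :
    Matrix (Fin (n + n)) (Fin (n + n)) ℂ :=
  (Matrix.fromBlocks A 0 0 B).submatrix finSumFinEquiv.symm finSumFinEquiv.symm

open scoped MatrixOrder

lemma matAbs_eq_sqrt {m : ℕ} (X : Matrix (Fin m) (Fin m) ℂ) : matAbs X = CFC.sqrt (Xᴴ * X) := by
  rw [CFC.sqrt_eq_cfc, cfc_nnreal_eq_real _ (Xᴴ * X) (posSemidef_conjTranspose_mul_self X).nonneg,
    (posSemidef_conjTranspose_mul_self X).1.cfc_eq, IsHermitian.cfc, Unitary.conjStarAlgAut_apply]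
  unfold matAbs
  congr 3
  funext i
  simp only [Function.comp_apply, Real.coe_sqrt, Real.coe_toNNReal']
  rcases le_total 0 ((posSemidef_conjTranspose_mul_self X).1.eigenvalues i) with h | h
  · rw [max_eq_left h]; rfl
  · rw [max_eq_right h, Real.sqrt_zero, Real.sqrt_eq_zero'.mpr h]; rfl

/-- General reindexed 2x2 block matrix. -/
noncomputable def bmat {n : ℕ} (A B C D : Matrix (Fin n) (Fin n) ℂ) :
    Matrix (Fin (n + n)) (Fin (n + n)) ℂ :=
  (Matrix.fromBlocks A B C D).submatrix finSumFinEquiv.symm finSumFinEquiv.symm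

lemma blockDiag2_eq_bmat {n : ℕ} (A B : Matrix (Fin n) (Fin n) ℂ) :
    blockDiag2 A B = bmat A 0 0 B := rfl

lemma bmat_mul {n : ℕ} (A B C D A' B' C' D' : Matrix (Fin n) (Fin n) ℂ) :
    bmat A B C D * bmat A' B' C' D'
      = bmat (A * A' + B * C') (A * B' + B * D') (C * A' + D * C') (C * B' + D * D') := by
  unfold bmat
  rw [Matrix.submatrix_mul_equiv (Matrix.fromBlocks A B C D) (Matrix.fromBlocks A' B' C' D')
    _ finSumFinEquiv.symm _, Matrix.fromBlocks_multiply]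

lemma bmat_conjTranspose {n : ℕ} (A B C D : Matrix (Fin n) (Fin n) ℂ) :
    (bmat A B C D)ᴴ = bmat Aᴴ Cᴴ Bᴴ Dᴴ := by
  unfold bmat
  rw [conjTranspose_submatrix, Matrix.fromBlocks_conjTranspose]

lemma bmat_add {n : ℕ} (A B C D A' B' C' D' : Matrix (Fin n) (Fin n) ℂ) :
    bmat A B C D + bmat A' B' C' D' = bmat (A + A') (B + B') (C + C') (D + D') := by
  unfold bmat
  rw [← Matrix.fromBlocks_add]
  rfl

lemma bmat_smul {n : ℕ} (r : ℝ) (A B C D : Matrix (Fin n) (Fin n) ℂ) :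
    r • bmat A B C D = bmat (r • A) (r • B) (r • C) (r • D) := by
  unfold bmat
  rw [← Matrix.fromBlocks_smul]
  rfl

lemma bmat_one {n : ℕ} : bmat (1 : Matrix (Fin n) (Fin n) ℂ) 0 0 1 = 1 := by
  unfold bmat
  rw [Matrix.fromBlocks_one, Matrix.submatrix_one_equiv]

-- matAbs lemmas
lemma matAbs_eq {m : ℕ} {X Z : Matrix (Fin m) (Fin m) ℂ} (hZ : Z.PosSemidef)
    (h : Z ^ 2 = Xᴴ * X) : matAbs X = Z :=
  by rw [matAbs_eq_sqrt]; exact CFC.sqrt_unique (by rw [← pow_two]; exact h) hZ.nonneg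

lemma matAbs_posSemidef {m : ℕ} (X : Matrix (Fin m) (Fin m) ℂ) : (matAbs X).PosSemidef :=
  by rw [matAbs_eq_sqrt]; exact (CFC.sqrt_nonneg _).posSemidef

lemma matAbs_sq {m : ℕ} (X : Matrix (Fin m) (Fin m) ℂ) : (matAbs X) ^ 2 = Xᴴ * X :=
  by rw [matAbs_eq_sqrt]; exact CFC.sq_sqrt _ (posSemidef_conjTranspose_mul_self X).nonneg

lemma blockDiag2_posSemidef {n : ℕ} {P Q : Matrix (Fin n) (Fin n) ℂ}
    (hP : P.PosSemidef) (hQ : Q.PosSemidef) : (blockDiag2 P Q).PosSemidef := by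
  have key : blockDiag2 P Q = (blockDiag2 (CFC.sqrt P) (CFC.sqrt Q))ᴴ * (blockDiag2 (CFC.sqrt P) (CFC.sqrt Q)) := by
    rw [blockDiag2_eq_bmat, blockDiag2_eq_bmat, bmat_conjTranspose, bmat_mul]
    rw [(CFC.sqrt_nonneg P).posSemidef.isHermitian.eq, (CFC.sqrt_nonneg Q).posSemidef.isHermitian.eq]
    rw [CFC.sqrt_mul_sqrt_self P hP.nonneg, CFC.sqrt_mul_sqrt_self Q hQ.nonneg]
    simp
  rw [key]
  exact Matrix.posSemidef_conjTranspose_mul_self _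

lemma matAbs_blockDiag2 {n : ℕ} (A B : Matrix (Fin n) (Fin n) ℂ) :
    matAbs (blockDiag2 A B) = blockDiag2 (matAbs A) (matAbs B) := by
  apply matAbs_eq (blockDiag2_posSemidef (matAbs_posSemidef A) (matAbs_posSemidef B))
  have hA2 : matAbs A * matAbs A = Aᴴ * A := by rw [← pow_two]; exact matAbs_sq A
  have hB2 : matAbs B * matAbs B = Bᴴ * B := by rw [← pow_two]; exact matAbs_sq B
  have h1 : (blockDiag2 (matAbs A) (matAbs B)) ^ 2 = bmat (Aᴴ * A) 0 0 (Bᴴ * B) := by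
    rw [pow_two, blockDiag2_eq_bmat, bmat_mul, hA2, hB2]
    simp
  have h2 : (blockDiag2 A B)ᴴ * blockDiag2 A B = bmat (Aᴴ * A) 0 0 (Bᴴ * B) := by
    rw [blockDiag2_eq_bmat, bmat_conjTranspose, bmat_mul]
    simp
  rw [h1, h2]

lemma matAbs_of_posSemidef {m : ℕ} {Z : Matrix (Fin m) (Fin m) ℂ} (hZ : Z.PosSemidef) :
    matAbs Z = Z := by
  apply matAbs_eq hZ
  rw [hZ.isHermitian.eq, pow_two]

attribute [local irreducible] bmat blockDiag2 matAbs

open Polynomial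

lemma det_scalar_sub_mul_comm {m : ℕ} (M N : Matrix (Fin m) (Fin m) ℂ[X]) :
    (Matrix.scalar (Fin m) (X : ℂ[X]) - M * N).det
      = (Matrix.scalar (Fin m) (X : ℂ[X]) - N * M).det := by
  set u : ℂ[X] := X with hu
  have hs : Matrix.scalar (Fin m) u = u • (1 : Matrix (Fin m) (Fin m) ℂ[X]) := by
    rw [scalar_apply, smul_eq_diagonal_mul]; simp
  have h1 : fromBlocks (u • 1) M N 1 * fromBlocks 1 0 (-N) 1
      = fromBlocks (u • (1 : Matrix (Fin m) (Fin m) ℂ[X]) - M * N) M 0 1 := by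
    rw [fromBlocks_multiply]
    simp [sub_eq_add_neg]
  have h2 : fromBlocks 1 0 (-N) (u • 1) * fromBlocks (u • 1) M N 1
      = fromBlocks (u • (1 : Matrix (Fin m) (Fin m) ℂ[X])) M 0 (u • 1 - N * M) := by
    rw [fromBlocks_multiply]
    simp [sub_eq_add_neg, mul_smul_comm, smul_mul_assoc, add_comm]
  have d1 := congrArg Matrix.det h1
  have d2 := congrArg Matrix.det h2
  rw [det_mul, det_fromBlocks_zero₁₂, det_fromBlocks_zero₂₁] at d1
  rw [det_mul, det_fromBlocks_zero₁₂, det_fromBlocks_zero₂₁] at d2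
  simp only [det_one, mul_one, one_mul] at d1 d2
  have hne : (u • (1 : Matrix (Fin m) (Fin m) ℂ[X])).det ≠ 0 := by
    have : (u • (1 : Matrix (Fin m) (Fin m) ℂ[X])).det = u ^ m := by
      simp [smul_eq_diagonal_mul]
    rw [this, hu]; exact pow_ne_zero _ X_ne_zero
  rw [hs]
  calc (u • (1:Matrix (Fin m) (Fin m) ℂ[X]) - M * N).det
      = (fromBlocks (u • 1) M N 1).det := d1.symm
    _ = (u • (1:Matrix (Fin m) (Fin m) ℂ[X]) - N * M).det := mul_left_cancel₀ hne d2

lemma charpoly_mul_comm' {m : ℕ} (M N : Matrix (Fin m) (Fin m) ℂ) :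
    (M * N).charpoly = (N * M).charpoly := by
  unfold Matrix.charpoly charmatrix
  simp only [RingHom.mapMatrix_apply, Matrix.map_mul]
  exact det_scalar_sub_mul_comm _ _

lemma eigsDesc_of_isHermitian {m : ℕ} {H : Matrix (Fin m) (Fin m) ℂ} (hH : H.IsHermitian) :
    eigsDesc H = fun k => hH.eigenvalues (Tuple.sort hH.eigenvalues (Fin.rev k)) := by
  rw [eigsDesc, dif_pos hH]

lemma charpoly_isHermitian {m : ℕ} {H : Matrix (Fin m) (Fin m) ℂ} (hH : H.IsHermitian) :
    H.charpoly = ∏ i, (X - C (hH.eigenvalues i : ℂ)) := by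
  have hU : (star (hH.eigenvectorUnitary : Matrix (Fin m) (Fin m) ℂ)) *
      (hH.eigenvectorUnitary : Matrix (Fin m) (Fin m) ℂ) = 1 := Unitary.coe_star_mul_self _
  have h1 : H.charpoly
      = (diagonal (RCLike.ofReal ∘ hH.eigenvalues) : Matrix (Fin m) (Fin m) ℂ).charpoly := by
    conv_lhs => rw [hH.spectral_theorem, Unitary.conjStarAlgAut_apply]
    rw [_root_.charpoly_mul_comm' ((hH.eigenvectorUnitary : Matrix (Fin m) (Fin m) ℂ) *
      diagonal (RCLike.ofReal ∘ hH.eigenvalues)) (star (hH.eigenvectorUnitary :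
      Matrix (Fin m) (Fin m) ℂ))]
    rw [← Matrix.mul_assoc, hU, Matrix.one_mul]
  rw [h1]
  have h2 : charmatrix (diagonal (RCLike.ofReal ∘ hH.eigenvalues) : Matrix (Fin m) (Fin m) ℂ)
      = diagonal (fun i => (X : ℂ[X]) - C (hH.eigenvalues i : ℂ)) := by
    ext i j
    by_cases h : i = j
    · subst h; simp
    · simp [h, diagonal_apply_ne _ h]
  rw [Matrix.charpoly, h2, det_diagonal]

lemma eigsDesc_eq_of_charpoly {m : ℕ} {H₁ H₂ : Matrix (Fin m) (Fin m) ℂ}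
    (h₁ : H₁.IsHermitian) (h₂ : H₂.IsHermitian) (h : H₁.charpoly = H₂.charpoly) :
    eigsDesc H₁ = eigsDesc H₂ := by
  -- multiset of eigenvalues over ℂ
  have hc : Multiset.map (fun i => (h₁.eigenvalues i : ℂ)) Finset.univ.val
      = Multiset.map (fun i => (h₂.eigenvalues i : ℂ)) Finset.univ.val := by
    have e1 := charpoly_isHermitian h₁
    have e2 := charpoly_isHermitian h₂
    rw [e1, e2] at h
    have r1 := roots_multiset_prod_X_sub_C
      (Multiset.map (fun i => (h₁.eigenvalues i : ℂ)) Finset.univ.val)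
    have r2 := roots_multiset_prod_X_sub_C
      (Multiset.map (fun i => (h₂.eigenvalues i : ℂ)) Finset.univ.val)
    rw [Multiset.map_map] at r1 r2
    rw [Finset.prod_eq_multiset_prod] at h
    conv_rhs at h => rw [Finset.prod_eq_multiset_prod]
    rw [← r1, ← r2]
    exact congrArg Polynomial.roots h
  -- multiset of eigenvalues over ℝ
  have hr : Multiset.map h₁.eigenvalues Finset.univ.val
      = Multiset.map h₂.eigenvalues Finset.univ.val := by
    have := congrArg (Multiset.map Complex.re) hc
    simpa [Multiset.map_map, Function.comp_def] using this
  -- sorted lists equal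
  set g₁ : Fin m → ℝ := h₁.eigenvalues ∘ Tuple.sort h₁.eigenvalues with hg₁
  set g₂ : Fin m → ℝ := h₂.eigenvalues ∘ Tuple.sort h₂.eigenvalues with hg₂
  have hmul : ∀ (f : Fin m → ℝ) (σ : Equiv.Perm (Fin m)),
      ((List.ofFn (f ∘ σ)) : Multiset ℝ) = Multiset.map f Finset.univ.val := by
    intro f σ
    have : (List.ofFn (f ∘ σ) : Multiset ℝ)
        = Multiset.map f (Multiset.map σ Finset.univ.val) := by
      rw [List.ofFn_eq_map, Multiset.map_map]
      rfl
    rw [this, Multiset.map_univ_val_equiv]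
  have hperm : (List.ofFn g₁).Perm (List.ofFn g₂) := by
    rw [← Multiset.coe_eq_coe]
    rw [hmul _ (Tuple.sort h₁.eigenvalues), hmul _ (Tuple.sort h₂.eigenvalues), hr]
  have hsorted₁ : (List.ofFn g₁).Pairwise (· ≤ ·) :=
    (Tuple.monotone_sort h₁.eigenvalues).sortedLE_ofFn.pairwise
  have hsorted₂ : (List.ofFn g₂).Pairwise (· ≤ ·) :=
    (Tuple.monotone_sort h₂.eigenvalues).sortedLE_ofFn.pairwise
  have : g₁ = g₂ := List.ofFn_injective (hperm.eq_of_pairwise' hsorted₁ hsorted₂)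
  funext k
  rw [eigsDesc, dif_pos h₁, eigsDesc, dif_pos h₂]
  exact congrFun this (Fin.rev k)

lemma filter_lt_eq_map {m k : ℕ} (hk : k ≤ m) :
    (Finset.univ.filter fun j : Fin m => (j : ℕ) < k)
      = Finset.map ⟨Fin.castLE hk, Fin.castLE_injective hk⟩ Finset.univ := by
  ext j
  simp only [Finset.mem_filter, Finset.mem_univ, true_and, Finset.mem_map,
    Function.Embedding.coeFn_mk]
  constructor
  · intro hj
    exact ⟨⟨(j : ℕ), hj⟩, by ext; simp⟩
  · rintro ⟨i, rfl⟩
    simpa using i.2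

lemma kSum_eq_sum_castLE {m k : ℕ} (hk : k ≤ m) (μ : Fin m → ℝ) :
    kSum μ k = ∑ j : Fin k, μ (Fin.castLE hk j) := by
  rw [kSum, filter_lt_eq_map hk, Finset.sum_map]
  rfl

lemma card_filter_lt {m k : ℕ} (hk : k ≤ m) :
    ((Finset.univ.filter fun j : Fin m => (j : ℕ) < k)).card = k := by
  rw [filter_lt_eq_map hk, Finset.card_map, Finset.card_univ, Fintype.card_fin]

/-- Abstract majorization step. -/
lemma sum_mul_le_kSum {m k : ℕ} (e c : Fin m → ℝ) (he : Antitone e)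
    (hc0 : ∀ i, 0 ≤ c i) (hc1 : ∀ i, c i ≤ 1) (hsum : ∑ i, c i = k) (hk : k ≤ m) :
    ∑ i, c i * e i ≤ kSum e k := by
  rcases Nat.eq_zero_or_pos k with rfl | hkpos
  · have hc : ∀ i ∈ Finset.univ, c i = 0 := by
      intro i _
      have := (Finset.sum_eq_zero_iff_of_nonneg (fun i _ => hc0 i)).mp (by simpa using hsum)
      exact this i (Finset.mem_univ i)
    have : ∑ i, c i * e i = 0 := Finset.sum_eq_zero (fun i hi => by rw [hc i hi, zero_mul])
    rw [this, kSum]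
    have : (Finset.univ.filter fun j : Fin m => (j : ℕ) < 0) = ∅ := by
      ext j; simp
    simp [this]
  · have hkm : k - 1 < m := by omega
    set t : ℝ := e ⟨k - 1, hkm⟩ with ht
    have key : ∑ i, c i * (e i - t)
        ≤ ∑ j ∈ Finset.univ.filter (fun j : Fin m => (j : ℕ) < k), (e j - t) := by
      rw [← Finset.sum_filter_add_sum_filter_not Finset.univ (fun j : Fin m => (j : ℕ) < k)
        (fun i => c i * (e i - t))]
      have h1 : ∑ i ∈ Finset.univ.filter (fun j : Fin m => (j : ℕ) < k), c i * (e i - t)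
          ≤ ∑ j ∈ Finset.univ.filter (fun j : Fin m => (j : ℕ) < k), (e j - t) := by
        apply Finset.sum_le_sum
        intro i hi
        have hik : (i : ℕ) < k := (Finset.mem_filter.mp hi).2
        have hle : i ≤ (⟨k - 1, hkm⟩ : Fin m) := by
          rw [Fin.le_def]; simpa using by omega
        have het : t ≤ e i := he hle
        calc c i * (e i - t) ≤ 1 * (e i - t) :=
              mul_le_mul_of_nonneg_right (hc1 i) (by linarith)
          _ = e i - t := one_mul _
      have h2 : ∑ i ∈ Finset.univ.filter (fun j : Fin m => ¬ (j : ℕ) < k), c i * (e i - t)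
          ≤ 0 := by
        apply Finset.sum_nonpos
        intro i hi
        have hik : ¬ (i : ℕ) < k := (Finset.mem_filter.mp hi).2
        have hle : (⟨k - 1, hkm⟩ : Fin m) ≤ i := by
          rw [Fin.le_def]; simpa using by omega
        have het : e i ≤ t := he hle
        exact mul_nonpos_of_nonneg_of_nonpos (hc0 i) (by linarith)
      linarith
    have expand : ∑ i, c i * e i = (∑ i, c i * (e i - t)) + t * k := by
      rw [← hsum, Finset.mul_sum, ← Finset.sum_add_distrib]
      apply Finset.sum_congr rfl
      intro i _
      ring
    have expand2 : ∑ j ∈ Finset.univ.filter (fun j : Fin m => (j : ℕ) < k), (e j - t)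
        = kSum e k - t * k := by
      rw [Finset.sum_sub_distrib, Finset.sum_const, card_filter_lt hk, kSum]
      push_cast
      ring
    rw [expand]
    have := key
    rw [expand2] at this
    linarith

lemma eigsDesc_antitone {m : ℕ} {H : Matrix (Fin m) (Fin m) ℂ} (hH : H.IsHermitian) :
    Antitone (eigsDesc H) := by
  rw [eigsDesc, dif_pos hH]
  intro a b hab
  exact Tuple.monotone_sort hH.eigenvalues (Fin.rev_le_rev.mpr hab)

lemma psd_diag_nonneg {m : ℕ} {M : Matrix (Fin m) (Fin m) ℂ} (h : M.PosSemidef) (i : Fin m) :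
    0 ≤ M i i := by
  have := h.diag_nonneg (i := i)
  simpa [dotProduct, Matrix.mulVec, Pi.single_apply, Finset.sum_ite_eq, mul_comm] using this


lemma trace_conj_diag {m k : ℕ} (W : Matrix (Fin m) (Fin k) ℂ) (d : Fin m → ℝ) :
    Matrix.trace (Wᴴ * (Matrix.diagonal (fun i => (d i : ℂ)) * W))
      = ((∑ i, d i * ∑ j, Complex.normSq (W i j) : ℝ) : ℂ) := by
  have step1 : Matrix.trace (Wᴴ * (Matrix.diagonal (fun i => (d i : ℂ)) * W))
      = ∑ j, ∑ i, star (W i j) * ((d i : ℂ) * W i j) := by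
    rw [Matrix.trace]
    apply Finset.sum_congr rfl
    intro j _
    rw [diag_apply, mul_apply]
    apply Finset.sum_congr rfl
    intro i _
    rw [conjTranspose_apply, diagonal_mul]
  rw [step1, Finset.sum_comm]
  push_cast
  apply Finset.sum_congr rfl
  intro i _
  rw [Finset.mul_sum]
  apply Finset.sum_congr rfl
  intro j _
  rw [Complex.normSq_eq_conj_mul_self, Complex.star_def]
  ring

/-- Ky Fan: upper bound along any isometry. -/
lemma re_trace_le_kSum {m k : ℕ} {H : Matrix (Fin m) (Fin m) ℂ} (hH : H.IsHermitian)
    (hk : k ≤ m) (V : Matrix (Fin m) (Fin k) ℂ) (hV : Vᴴ * V = 1) :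
    (Matrix.trace (Vᴴ * H * V)).re ≤ kSum (eigsDesc H) k := by
  classical
  set U : Matrix (Fin m) (Fin m) ℂ := (hH.eigenvectorUnitary : Matrix (Fin m) (Fin m) ℂ) with hUdef
  have hU1 : U * star U = 1 := Unitary.coe_mul_star_self _
  have hU2 : star U * U = 1 := Unitary.coe_star_mul_self _
  set lam := hH.eigenvalues with hlam
  set Dg : Matrix (Fin m) (Fin m) ℂ := diagonal (RCLike.ofReal ∘ lam) with hDg
  set W : Matrix (Fin m) (Fin k) ℂ := star U * V with hW
  have hWH : Wᴴ = Vᴴ * U := by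
    rw [hW, conjTranspose_mul]
    congr 1
    rw [star_eq_conjTranspose, conjTranspose_conjTranspose]
  have hWW : Wᴴ * W = 1 := by
    rw [hWH, hW, Matrix.mul_assoc, ← Matrix.mul_assoc U, hU1, Matrix.one_mul, hV]
  have htr : Vᴴ * H * V = Wᴴ * Dg * W := by
    conv_lhs => rw [hH.spectral_theorem, Unitary.conjStarAlgAut_apply]
    rw [hWH, hW]
    simp only [← hUdef, ← hDg, ← hlam, Matrix.mul_assoc]
  set c : Fin m → ℝ := fun i => ∑ j, Complex.normSq (W i j) with hc
  have hc0 : ∀ i, 0 ≤ c i := fun i => Finset.sum_nonneg fun j _ => Complex.normSq_nonneg _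
  have hterm : ∀ i : Fin m, ∀ j : Fin k,
      star (W i j) * W i j = ((Complex.normSq (W i j) : ℝ) : ℂ) := by
    intro i j
    rw [Complex.normSq_eq_conj_mul_self, Complex.star_def]
  have hDg' : Dg = Matrix.diagonal (fun i => ((lam i : ℝ) : ℂ)) := rfl
  have htrval : Matrix.trace (Vᴴ * H * V) = ((∑ i, lam i * c i : ℝ) : ℂ) := by
    rw [htr, Matrix.mul_assoc, hDg', trace_conj_diag W lam]
  have hcsum : ∑ i, c i = k := by
    have h1 : Matrix.trace (Wᴴ * W) = (k : ℂ) := by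
      rw [hWW, Matrix.trace_one]
      simp
    have h2 : Matrix.trace (Wᴴ * W) = ((∑ i, c i : ℝ) : ℂ) := by
      rw [Matrix.trace]
      simp only [diag_apply, mul_apply, conjTranspose_apply]
      rw [Finset.sum_comm]
      simp only [hc]
      push_cast
      apply Finset.sum_congr rfl
      intro i _
      apply Finset.sum_congr rfl
      intro j _
      exact hterm i j
    have := h1.symm.trans h2
    exact_mod_cast this.symm
  have hc1 : ∀ i, c i ≤ 1 := by
    intro i
    set P : Matrix (Fin m) (Fin m) ℂ := W * Wᴴ with hP
    have hPP : P * P = P := by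
      rw [hP, Matrix.mul_assoc, ← Matrix.mul_assoc Wᴴ, hWW, Matrix.one_mul]
    have hPH : Pᴴ = P := by rw [hP, conjTranspose_mul, conjTranspose_conjTranspose]
    have hQ : (1 - P)ᴴ * (1 - P) = 1 - P := by
      rw [conjTranspose_sub, conjTranspose_one, hPH, sub_mul, mul_sub, mul_sub, hPP]
      simp only [Matrix.mul_one, Matrix.one_mul]
      abel
    have hQpsd : (1 - P).PosSemidef := by
      have := Matrix.posSemidef_conjTranspose_mul_self (1 - P)
      rwa [hQ] at this
    have hdiag := psd_diag_nonneg hQpsd i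
    have hPii : P i i = ((c i : ℝ) : ℂ) := by
      rw [hP, mul_apply]
      simp only [conjTranspose_apply, hc]
      push_cast
      apply Finset.sum_congr rfl
      intro j _
      rw [mul_comm]
      exact hterm i j
    rw [Complex.le_def] at hdiag
    obtain ⟨hre, -⟩ := hdiag
    simp only [Matrix.sub_apply, Matrix.one_apply_eq, hPii, Complex.sub_re, Complex.one_re,
      Complex.ofReal_re, Complex.zero_re] at hre
    linarith
  have hre : (Matrix.trace (Vᴴ * H * V)).re = ∑ i, lam i * c i := by
    rw [htrval, Complex.ofReal_re]
  rw [hre]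
  set π : Equiv.Perm (Fin m) := (Fin.revPerm : Equiv.Perm (Fin m)).trans (Tuple.sort lam) with hπ
  have hsum : ∑ i, lam i * c i = ∑ j, (c ∘ π) j * eigsDesc H j := by
    rw [← Equiv.sum_comp π (fun i => lam i * c i)]
    apply Finset.sum_congr rfl
    intro j _
    rw [eigsDesc, dif_pos hH]
    simp only [Function.comp_apply, hπ, Equiv.trans_apply, Fin.revPerm_apply, ← hlam]
    ring
  rw [hsum]
  apply sum_mul_le_kSum _ _ (eigsDesc_antitone hH) (fun j => hc0 _) (fun j => hc1 _) _ hk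
  rw [Equiv.sum_comp π c, hcsum]

/-- Ky Fan: attainment of the `k`-sum of top eigenvalues by an isometry. -/
lemma exists_isometry_kSum {m k : ℕ} {H : Matrix (Fin m) (Fin m) ℂ} (hH : H.IsHermitian)
    (hk : k ≤ m) :
    ∃ V : Matrix (Fin m) (Fin k) ℂ, Vᴴ * V = 1 ∧
      (Matrix.trace (Vᴴ * H * V)).re = kSum (eigsDesc H) k := by
  classical
  set U : Matrix (Fin m) (Fin m) ℂ := (hH.eigenvectorUnitary : Matrix (Fin m) (Fin m) ℂ) with hUdef
  have hU2 : Uᴴ * U = 1 := by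
    rw [← star_eq_conjTranspose]; exact Unitary.coe_star_mul_self _
  set lam := hH.eigenvalues with hlam
  set Dg : Matrix (Fin m) (Fin m) ℂ := diagonal (RCLike.ofReal ∘ lam) with hDg
  set ι : Fin k → Fin m := fun j => Tuple.sort lam (Fin.rev (Fin.castLE hk j)) with hι
  have hιinj : Function.Injective ι := by
    intro a b hab
    have := (Tuple.sort lam).injective hab
    have := Fin.rev_injective this
    exact Fin.castLE_injective hk this
  set V : Matrix (Fin m) (Fin k) ℂ := U.submatrix id ι with hV
  have hVH : Vᴴ = Uᴴ.submatrix ι id := by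
    rw [hV, conjTranspose_submatrix]
  have hisom : Vᴴ * V = 1 := by
    rw [hVH, hV]
    have : Uᴴ.submatrix ι id * U.submatrix id ι
        = (Uᴴ * U).submatrix ι ι := by
      have := Matrix.submatrix_mul_equiv Uᴴ U ι (Equiv.refl (Fin m)) ι
      simpa using this
    rw [this, hU2]
    ext a b
    simp only [submatrix_apply, one_apply]
    by_cases hab : a = b
    · simp [hab]
    · simp only [hab, if_false, ite_eq_right_iff]
      intro h
      exact absurd (hιinj h) hab
  refine ⟨V, hisom, ?_⟩
  have hform : Vᴴ * H * V = Dg.submatrix ι ι := by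
    conv_lhs => rw [hH.spectral_theorem, Unitary.conjStarAlgAut_apply]
    rw [hVH, hV]
    simp only [← hUdef, ← hDg, ← hlam]
    have e1 : Uᴴ.submatrix ι id * (U * Dg * star U) = (Uᴴ * (U * Dg * star U)).submatrix ι id := by
      have := Matrix.submatrix_mul_equiv Uᴴ (U * Dg * star U) ι (Equiv.refl (Fin m)) id
      simpa using this
    rw [e1]
    have e2 : Uᴴ * (U * Dg * star U) = Dg * star U := by
      rw [← Matrix.mul_assoc, ← Matrix.mul_assoc, hU2, Matrix.one_mul]
    rw [e2]
    have e3 : (Dg * star U).submatrix ι id * U.submatrix id ι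
        = ((Dg * star U) * U).submatrix ι ι := by
      have := Matrix.submatrix_mul_equiv (Dg * star U) U ι (Equiv.refl (Fin m)) ι
      simpa using this
    rw [e3, Matrix.mul_assoc]
    rw [show star U * U = 1 from Unitary.coe_star_mul_self _, Matrix.mul_one]
  rw [hform, Matrix.trace]
  have : ∑ j : Fin k, (Dg.submatrix ι ι) j j = ((∑ j : Fin k, lam (ι j) : ℝ) : ℂ) := by
    push_cast
    apply Finset.sum_congr rfl
    intro j _
    simp [hDg, hι]
  rw [show (Dg.submatrix ι ι).diag = fun j => (Dg.submatrix ι ι) j j from rfl]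
  rw [this, Complex.ofReal_re, kSum_eq_sum_castLE hk]
  apply Finset.sum_congr rfl
  intro j _
  rw [eigsDesc, dif_pos hH]

set_option maxHeartbeats 1000000 in
/-- For any `A, B` and every `k`, the sum of the `k` largest singular values of
`A ⊕ B` is at most that of `(|A|+|B|) ⊕ 0`. -/
theorem kyfan_blockDiag {n : ℕ} (A B : Matrix (Fin n) (Fin n) ℂ) (k : ℕ) (hk : k ≤ n + n) :
    kSum (svalsDesc (blockDiag2 A B)) k ≤
      kSum (svalsDesc (blockDiag2 (matAbs A + matAbs B) 0)) k := by
  set P := matAbs A with hPdef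
  set Q := matAbs B with hQdef
  have hP : P.PosSemidef := matAbs_posSemidef A
  have hQ : Q.PosSemidef := matAbs_posSemidef B
  have hLHS : svalsDesc (blockDiag2 A B) = eigsDesc (blockDiag2 P Q) := by
    rw [svalsDesc, matAbs_blockDiag2]
  have hPQ : (P + Q).PosSemidef := hP.add hQ
  have hRblock : (blockDiag2 (P + Q) 0).PosSemidef :=
    blockDiag2_posSemidef hPQ Matrix.PosSemidef.zero
  have hRHS : svalsDesc (blockDiag2 (P + Q) 0) = eigsDesc (blockDiag2 (P + Q) 0) := by
    rw [svalsDesc, matAbs_of_posSemidef hRblock]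
  set R := CFC.sqrt P with hRdef
  set S := CFC.sqrt Q with hSdef
  have hRH : Rᴴ = R := (CFC.sqrt_nonneg P).posSemidef.isHermitian
  have hSH : Sᴴ = S := (CFC.sqrt_nonneg Q).posSemidef.isHermitian
  have hRR : R * R = P := CFC.sqrt_mul_sqrt_self P hP.nonneg
  have hSS : S * S = Q := CFC.sqrt_mul_sqrt_self Q hQ.nonneg
  set W := bmat R S 0 0 with hWdef
  have hWH : Wᴴ = bmat R 0 S 0 := by
    rw [hWdef, bmat_conjTranspose, hRH, hSH, conjTranspose_zero]
  set M := Wᴴ * W with hMdef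
  have hM : M = bmat P (R * S) (S * R) Q := by
    rw [hMdef, hWH, hWdef, bmat_mul]
    rw [hRR, hSS]
    congr 1 <;> simp
  have hWWt : W * Wᴴ = blockDiag2 (P + Q) 0 := by
    rw [hWdef, hWH, bmat_mul, blockDiag2_eq_bmat, hRR, hSS]
    congr 1 <;> simp
  set Dm := bmat (1 : Matrix (Fin n) (Fin n) ℂ) 0 0 (-1) with hDmdef
  have hDH : Dmᴴ = Dm := by
    rw [hDmdef, bmat_conjTranspose]
    congr 1 <;> simp
  have hDD : Dm * Dm = 1 := by
    rw [hDmdef, bmat_mul, ← bmat_one]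
    congr 1 <;> simp
  have hDMD : Dm * M * Dm = bmat P (-(R * S)) (-(S * R)) Q := by
    rw [hDmdef, hM, bmat_mul, bmat_mul]
    congr 1 <;> simp
  have half : ∀ (X : Matrix (Fin n) (Fin n) ℂ), (2⁻¹ : ℝ) • X + (2⁻¹ : ℝ) • X = X := by
    intro X; rw [← add_smul]; norm_num
  have halfneg : ∀ (X : Matrix (Fin n) (Fin n) ℂ), (2⁻¹ : ℝ) • X + (2⁻¹ : ℝ) • (-X) = 0 := by
    intro X; rw [smul_neg, add_neg_cancel]
  have hdecomp : blockDiag2 P Q = (2⁻¹ : ℝ) • M + (2⁻¹ : ℝ) • (Dm * M * Dm) := by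
    rw [hDMD, hM, bmat_smul, bmat_smul, bmat_add, half, half, halfneg, halfneg,
      blockDiag2_eq_bmat]
  have hMH : M.IsHermitian := by
    rw [hMdef]; exact Matrix.isHermitian_conjTranspose_mul_self W
  have hPQH : (blockDiag2 P Q).IsHermitian := (blockDiag2_posSemidef hP hQ).isHermitian
  obtain ⟨V, hViso, hVeq⟩ := exists_isometry_kSum hPQH hk
  have hsplit : (Matrix.trace (Vᴴ * (blockDiag2 P Q) * V)).re
      = 2⁻¹ * (Matrix.trace (Vᴴ * M * V)).re
        + 2⁻¹ * (Matrix.trace (Vᴴ * (Dm * M * Dm) * V)).re := by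
    rw [hdecomp, Matrix.mul_add, Matrix.add_mul, Matrix.trace_add]
    rw [Matrix.mul_smul, Matrix.smul_mul, Matrix.mul_smul, Matrix.smul_mul]
    rw [Matrix.trace_smul, Matrix.trace_smul]
    rw [Complex.add_re, Complex.smul_re, Complex.smul_re]
    norm_num
  have h1 : (Matrix.trace (Vᴴ * M * V)).re ≤ kSum (eigsDesc M) k :=
    re_trace_le_kSum hMH hk V hViso
  have hDViso : (Dm * V)ᴴ * (Dm * V) = 1 := by
    rw [conjTranspose_mul, hDH, Matrix.mul_assoc, ← Matrix.mul_assoc Dm, hDD,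
      Matrix.one_mul, hViso]
  have hform2 : Vᴴ * (Dm * M * Dm) * V = (Dm * V)ᴴ * M * (Dm * V) := by
    rw [conjTranspose_mul, hDH]
    simp only [Matrix.mul_assoc]
  have h2 : (Matrix.trace (Vᴴ * (Dm * M * Dm) * V)).re ≤ kSum (eigsDesc M) k := by
    rw [hform2]
    exact re_trace_le_kSum hMH hk _ hDViso
  have hMeig : eigsDesc M = eigsDesc (blockDiag2 (P + Q) 0) := by
    rw [← hWWt]
    exact eigsDesc_eq_of_charpoly hMH (Matrix.isHermitian_mul_conjTranspose_self W)
      (by rw [hMdef]; exact _root_.charpoly_mul_comm' Wᴴ W)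
  rw [hLHS, hRHS]
  calc kSum (eigsDesc (blockDiag2 P Q)) k
      = (Matrix.trace (Vᴴ * (blockDiag2 P Q) * V)).re := hVeq.symm
    _ = 2⁻¹ * (Matrix.trace (Vᴴ * M * V)).re
        + 2⁻¹ * (Matrix.trace (Vᴴ * (Dm * M * Dm) * V)).re := hsplit
    _ ≤ kSum (eigsDesc M) k := by linarith
    _ = kSum (eigsDesc (blockDiag2 (P + Q) 0)) k := by rw [hMeig]
end
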